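/- Let $Q_0$ be a probability density supported in $[-|G|,|G|]\times\mathbb{V}$ solving $\partial_y((v\cdot G - y)Q_0) = \Lambda_0(y)(\langle Q_0\rangle - Q_0)$ with no mass on the boundary lines. Then the pointwise identity $G\cdot \int_{\mathbb{V}} v\, Q_0(y,v)\,dv = y \int_{\mathbb{V}} Q_0(y,v)\,dv$ holds for all $y \in \mathbb{R}$. Consequently the function $y \mapsto \int_{\mathbb{V}} v\,Q_0(y,v)\,dv$ is not identically zero. -/

import Mathlib

open MeasureTheory Set

noncomputable section

set_option maxHeartbeats 1000000 in
/-- the flux identity `G ⋅ ∫ v Q0 dv = y ∫ Q0 dv` and the nonvanishing of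
the velocity moment `y ↦ ∫ v Q0 dv`. -/
theorem flux_identity {d : ℕ} (G : EuclideanSpace ℝ (Fin d)) (hG : G ≠ 0)
    (V : Set (EuclideanSpace ℝ (Fin d))) (hV : V = Metric.closedBall 0 1)
    (Λ0 : ℝ → ℝ) (lam1 lam2 : ℝ) (hlam1 : 0 < lam1)
    (hΛcont : Continuous Λ0) (hΛbd : ∀ y, lam1 ≤ Λ0 y ∧ Λ0 y ≤ lam2)
    (Q0 : ℝ → EuclideanSpace ℝ (Fin d) → ℝ)
    (hpos : ∀ y v, 0 ≤ Q0 y v)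
    (hint : Integrable (fun p : ℝ × EuclideanSpace ℝ (Fin d) => Q0 p.1 p.2)
      (volume.prod (volume.restrict V)))
    (hprob : ∫ y, ∫ v in V, Q0 y v = 1)
    (hsupp : ∀ y, ∀ v, ‖G‖ < |y| → Q0 y v = 0)
    (heq : ∀ y, ∀ v ∈ V,
      HasDerivAt (fun y' => ((inner ℝ v G : ℝ) - y') * Q0 y' v)
        (Λ0 y * (((volume V).toReal)⁻¹ * (∫ w in V, Q0 y w) - Q0 y v)) y) :
    (∀ y, (inner ℝ G (∫ v in V, Q0 y v • v) : ℝ) = y * ∫ v in V, Q0 y v)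
    ∧ (fun y => ∫ v in V, Q0 y v • v) ≠ 0 := by
  have hVmeas : MeasurableSet V := by rw [hV]; exact measurableSet_closedBall
  have hVfin : volume V ≠ ⊤ := by
    rw [hV]; exact (isCompact_closedBall _ _).measure_lt_top.ne
  have hVpos : volume V ≠ 0 := by
    rw [hV]; exact (Metric.measure_closedBall_pos volume 0 one_pos).ne'
  have hc0 : ((volume V).toReal) ≠ 0 :=
    (ENNReal.toReal_pos hVpos hVfin).ne'
  have hlam2 : ∀ t, ‖Λ0 t‖ ≤ lam2 := fun t => by
    rw [Real.norm_eq_abs, abs_of_pos (lt_of_lt_of_le hlam1 (hΛbd t).1)]; exact (hΛbd t).2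
  set c : ℝ := (volume V).toReal with hcdef
  set I : ℝ → ℝ := fun t => ∫ w in V, Q0 t w with hIdef
  have hIint : Integrable I volume := hint.integral_prod_left
  set g' : ℝ → EuclideanSpace ℝ (Fin d) → ℝ :=
    fun t v => Λ0 t * (c⁻¹ * I t - Q0 t v) with hg'def
  -- the inner integral of the right-hand side vanishes for a.e. t
  have hinner0 : ∀ᵐ t : ℝ, (∫ v in V, g' t v) = 0 := by
    filter_upwards [hint.prod_right_ae] with t ht
    have h1 : (∫ v in V, g' t v) = Λ0 t * ∫ v in V, (c⁻¹ * I t - Q0 t v) := by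
      rw [hg'def]; exact integral_const_mul _ _
    have hconst : IntegrableOn (fun _ => c⁻¹ * I t) V volume :=
      (integrableOn_const_iff).mpr (Or.inr hVfin.lt_top)
    rw [h1, integral_sub hconst ht, setIntegral_const, smul_eq_mul]
    have : c * (c⁻¹ * I t) = I t := by field_simp
    change Λ0 t * (c * (c⁻¹ * I t) - _) = 0
    rw [this, sub_self, mul_zero]
  -- key: the flux is integrable and vanishes for EVERY y
  have key : ∀ y : ℝ, IntegrableOn (fun v => ((inner ℝ v G : ℝ) - y) * Q0 y v) V volume ∧
      (∫ v in V, ((inner ℝ v G : ℝ) - y) * Q0 y v) = 0 := by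
    intro y
    set a : ℝ := ‖G‖ + 1 with hadef
    have hQS : Integrable (fun p : ℝ × EuclideanSpace ℝ (Fin d) => Q0 p.1 p.2)
        ((volume.restrict (Set.uIoc a y)).prod (volume.restrict V)) := by
      rw [Measure.restrict_prod_eq_prod_univ]
      exact hint.restrict
    have hterm2 : Integrable (fun p : ℝ × EuclideanSpace ℝ (Fin d) => Λ0 p.1 * Q0 p.1 p.2)
        ((volume.restrict (Set.uIoc a y)).prod (volume.restrict V)) :=
      hQS.bdd_mul ((hΛcont.comp continuous_fst).aestronglyMeasurable)
        (Filter.Eventually.of_forall fun p => hlam2 p.1)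
    have hterm1 : Integrable (fun p : ℝ × EuclideanSpace ℝ (Fin d) => Λ0 p.1 * (c⁻¹ * I p.1))
        ((volume.restrict (Set.uIoc a y)).prod (volume.restrict V)) := by
      have h1 : Integrable (fun t => Λ0 t * (c⁻¹ * I t)) (volume.restrict (Set.uIoc a y)) :=
        ((hIint.const_mul c⁻¹).restrict).bdd_mul hΛcont.aestronglyMeasurable
          (Filter.Eventually.of_forall fun t => hlam2 t)
      have hone : Integrable (fun _ : EuclideanSpace ℝ (Fin d) => (1:ℝ))
          (volume.restrict V) := (integrableOn_const_iff).mpr (Or.inr hVfin.lt_top)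
      simpa using h1.mul_prod hone
    have hg'prod : Integrable (fun p : ℝ × EuclideanSpace ℝ (Fin d) => g' p.1 p.2)
        ((volume.restrict (Set.uIoc a y)).prod (volume.restrict V)) := by
      refine (hterm1.sub hterm2).congr (Filter.Eventually.of_forall fun p => ?_)
      simp only [Pi.sub_apply, hg'def]
      ring
    have hswap : Integrable (fun p : EuclideanSpace ℝ (Fin d) × ℝ => g' p.2 p.1)
        ((volume.restrict V).prod (volume.restrict (Set.uIoc a y))) := hg'prod.swap
    have haev : ∀ᵐ v ∂(volume.restrict V),
        Integrable (fun t => g' t v) (volume.restrict (Set.uIoc a y)) :=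
      hswap.prod_right_ae
    have hQa : ∀ v, Q0 a v = 0 := by
      intro v
      refine hsupp a v ?_
      have ha0 : (0:ℝ) < a := by rw [hadef]; positivity
      rw [abs_of_pos ha0, hadef]; linarith
    have hft : ∀ᵐ v ∂(volume.restrict V),
        ((inner ℝ v G : ℝ) - y) * Q0 y v =
          (if a ≤ y then (1:ℝ) else -1) • ∫ t in Set.uIoc a y, g' t v := by
      filter_upwards [haev, ae_restrict_mem hVmeas] with v hintv hvV
      have hderiv : ∀ t ∈ Set.uIcc a y,
          HasDerivAt (fun y' => ((inner ℝ v G : ℝ) - y') * Q0 y' v) (g' t v) t :=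
        fun t _ => heq t v hvV
      have hii : IntervalIntegrable (fun t => g' t v) volume a y :=
        intervalIntegrable_iff.mpr hintv
      have hftc := intervalIntegral.integral_eq_sub_of_hasDerivAt hderiv hii
      rw [hQa v, mul_zero, sub_zero] at hftc
      rw [← hftc]
      exact intervalIntegral.intervalIntegral_eq_integral_uIoc _ _ _ _
    have hIntV : IntegrableOn (fun v => ((inner ℝ v G : ℝ) - y) * Q0 y v) V volume := by
      have base : Integrable (fun v => ∫ t in Set.uIoc a y, g' t v)
          (volume.restrict V) := hswap.integral_prod_left
      have hInt2 : Integrable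
          (fun v => (if a ≤ y then (1:ℝ) else -1) • ∫ t in Set.uIoc a y, g' t v)
          (volume.restrict V) := by
        simp only [smul_eq_mul]
        exact base.const_mul _
      exact hInt2.congr (Filter.EventuallyEq.symm hft)
    have hz : (∫ v in V, ((inner ℝ v G : ℝ) - y) * Q0 y v) = 0 := by
      rw [integral_congr_ae hft, integral_smul]
      have hswap2 : (∫ v in V, ∫ t in Set.uIoc a y, g' t v)
          = ∫ t in Set.uIoc a y, ∫ v in V, g' t v :=
        integral_integral_swap (f := fun v t => g' t v) hswap
      rw [hswap2, integral_eq_zero_of_ae (ae_restrict_of_ae hinner0), smul_zero]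
    exact ⟨hIntV, hz⟩
  -- the pointwise identity
  have main : ∀ y, (inner ℝ G (∫ v in V, Q0 y v • v) : ℝ) = y * ∫ v in V, Q0 y v := by
    intro y
    obtain ⟨hIntV, hz⟩ := key y
    by_cases hsm : Integrable (fun v => Q0 y v • v) (volume.restrict V)
    · have hvg : ∀ v : EuclideanSpace ℝ (Fin d),
          (inner ℝ G (Q0 y v • v) : ℝ) = (inner ℝ v G : ℝ) * Q0 y v := by
        intro v
        rw [real_inner_smul_right, real_inner_comm, mul_comm]
      have hA : (∫ v in V, (inner ℝ v G : ℝ) * Q0 y v)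
          = (inner ℝ G (∫ v in V, Q0 y v • v) : ℝ) := by
        rw [← integral_inner hsm G]
        exact integral_congr_ae (Filter.Eventually.of_forall fun v => (hvg v).symm)
      have hGint' : Integrable (fun v => (inner ℝ v G : ℝ) * Q0 y v) (volume.restrict V) :=
        (hsm.const_inner G).congr (Filter.Eventually.of_forall hvg)
      by_cases hy : y = 0
      · subst hy
        rw [zero_mul, ← hA]
        simpa using hz
      · have hyQ : Integrable (fun v => y * Q0 y v) (volume.restrict V) := by
          have heqfun : (fun v : EuclideanSpace ℝ (Fin d) => y * Q0 y v)
              = fun v => (inner ℝ v G : ℝ) * Q0 y v - ((inner ℝ v G : ℝ) - y) * Q0 y v := by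
            funext v; ring
          rw [heqfun]; exact hGint'.sub hIntV
        have hQint : Integrable (fun v => Q0 y v) (volume.restrict V) := by
          have h2 := hyQ.const_mul y⁻¹
          have heqfun : (fun v : EuclideanSpace ℝ (Fin d) => y⁻¹ * (y * Q0 y v))
              = fun v => Q0 y v := by
            funext v; field_simp
          rwa [heqfun] at h2
        have hsplit : (∫ v in V, ((inner ℝ v G : ℝ) - y) * Q0 y v)
            = (∫ v in V, (inner ℝ v G : ℝ) * Q0 y v) - ∫ v in V, y * Q0 y v := by
          rw [← integral_sub hGint' (hQint.const_mul y)]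
          congr 1
          funext v
          ring
        rw [hsplit, integral_const_mul] at hz
        rw [← hA]
        linarith
    · have hQn : ¬ Integrable (fun v => Q0 y v) (volume.restrict V) := by
        intro hQ
        apply hsm
        refine hQ.mono' (hQ.aestronglyMeasurable.smul aestronglyMeasurable_id) ?_
        filter_upwards [ae_restrict_mem hVmeas] with v hv
        have h1 : ‖v‖ ≤ 1 := by
          rw [hV] at hv
          exact mem_closedBall_zero_iff.mp hv
        rw [norm_smul, Real.norm_of_nonneg (hpos y v)]
        nlinarith [hpos y v, norm_nonneg v]
      rw [integral_undef hsm, integral_undef hQn, inner_zero_right, mul_zero]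
  refine ⟨main, ?_⟩
  intro h0
  have hI0 : ∀ᵐ y : ℝ, (∫ v in V, Q0 y v) = 0 := by
    have hae : ∀ᵐ y : ℝ, y ≠ 0 := by
      rw [ae_iff]
      have hset : {y : ℝ | ¬ y ≠ 0} = {0} := by ext z; simp
      rw [hset]
      exact measure_singleton 0
    filter_upwards [hae] with y hy
    have h0y : (∫ v in V, Q0 y v • v) = 0 := by
      have := congrFun h0 y
      simpa using this
    have hmy := main y
    rw [h0y, inner_zero_right] at hmy
    exact ((mul_eq_zero.mp hmy.symm).resolve_left hy)
  have hzero : (∫ y : ℝ, ∫ v in V, Q0 y v) = 0 := integral_eq_zero_of_ae hI0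
  rw [hprob] at hzero
  exact one_ne_zero hzero
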